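/- arXiv:0912.4045 — 2 statements merged into one kernel-verified Lean document; each statement's English description precedes it below -/
import Mathlib

section
/- Let Y = Xβ + ε with β supported on S, |S| ≤ s, and let β̂ minimize (1/2n)‖Y − Xβ'‖₂² + λ_n‖β'‖₁. Set υ = β̂ − β. If ‖X^T ε / n‖_∞ ≤ λ_n / 2, then ‖υ_{Sᶜ}‖₁ ≤ 3‖υ_S‖₁. -/
open Finset

noncomputable def l1 {p : ℕ} (v : Fin p → ℝ) : ℝ := ∑ i, |v i|
noncomputable def l2 {n : ℕ} (v : Fin n → ℝ) : ℝ := Real.sqrt (∑ i, (v i) ^ 2)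

def restr {p : ℕ} (T : Finset (Fin p)) (v : Fin p → ℝ) : Fin p → ℝ :=
  fun i => if i ∈ T then v i else 0

/-- the Lasso error satisfies the cone constraint
‖υ_{Sᶜ}‖₁ ≤ 3‖υ_S‖₁ when ‖X^Tε/n‖_∞ ≤ λ/2. -/
theorem stmt14 (n p s : ℕ) (hn : 1 ≤ n)
    (X : Matrix (Fin n) (Fin p) ℝ) (β βhat ε : _) (Y : Fin n → ℝ) (lam : ℝ)
    (hlam : 0 < lam)
    (hY : Y = X.mulVec β + ε)
    (S : Finset (Fin p)) (hS : S = Finset.univ.filter fun j => β j ≠ 0)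
    (hScard : S.card ≤ s)
    -- β̂ minimizes the Lasso objective
    (hopt : ∀ b : Fin p → ℝ,
      (1 / (2 * n)) * (l2 (Y - X.mulVec βhat)) ^ 2 + lam * l1 βhat ≤
        (1 / (2 * n)) * (l2 (Y - X.mulVec b)) ^ 2 + lam * l1 b)
    -- ‖X^T ε / n‖_∞ ≤ λ/2
    (hnoise : ∀ j, |(∑ i, X i j * ε i) / n| ≤ lam / 2) :
    l1 (restr Sᶜ (βhat - β)) ≤ 3 * l1 (restr S (βhat - β)) := by
  have hN : (0:ℝ) < n := by exact_mod_cast hn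
  set υ : Fin p → ℝ := βhat - β with hυ
  set a := l1 (restr S υ) with ha
  set b := l1 (restr Sᶜ υ) with hb
  have hsq : ∀ (m : ℕ) (v : Fin m → ℝ), (l2 v)^2 = ∑ i, (v i)^2 := fun m v =>
    Real.sq_sqrt (Finset.sum_nonneg fun i _ => sq_nonneg _)
  have hYβ : Y - X.mulVec β = ε := by rw [hY]; abel
  have hYβhat : Y - X.mulVec βhat = ε - X.mulVec υ := by
    rw [hY, hυ, Matrix.mulVec_sub]; abel
  have key := hopt β
  rw [hYβ, hYβhat, hsq, hsq] at key
  set E := ∑ i, (ε i)^2 with hE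
  set C := ∑ i, ε i * X.mulVec υ i with hC
  set W := ∑ i, (X.mulVec υ i)^2 with hW
  have expand : ∑ i, (ε i - X.mulVec υ i) ^ 2 = E - 2*C + W := by
    rw [hE, hC, hW, Finset.mul_sum, ← Finset.sum_sub_distrib, ← Finset.sum_add_distrib]
    apply Finset.sum_congr rfl; intro i _; ring
  simp only [Pi.sub_apply] at key
  rw [expand] at key
  have hWnn : 0 ≤ W := Finset.sum_nonneg fun i _ => sq_nonneg _
  -- l1 splits
  have h1 : l1 υ = a + b := by
    rw [ha, hb]; unfold l1 restr
    rw [← Finset.sum_add_distrib]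
    apply Finset.sum_congr rfl; intro i _
    by_cases h : i ∈ S <;> simp [h]
  -- l1 β - l1 βhat ≤ a - b
  have h2 : l1 β - l1 βhat ≤ a - b := by
    rw [ha, hb]; unfold l1 restr
    rw [← Finset.sum_sub_distrib, ← Finset.sum_sub_distrib]
    apply Finset.sum_le_sum; intro i _
    by_cases h : i ∈ S
    · rw [if_pos h, if_neg (by simp [h])]
      simp only [hυ, Pi.sub_apply, abs_zero, sub_zero]
      rw [abs_sub_comm]; exact abs_sub_abs_le_abs_sub _ _
    · have hb0 : β i = 0 := by
        by_contra hb0; exact h (by simp [hS, hb0])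
      simp [h, hb0, hυ]
  -- bound on C
  have h3 : C ≤ (n:ℝ) * (lam/2) * (a + b) := by
    rw [← h1, hC]
    have swap : C = ∑ j, (∑ i, X i j * ε i) * υ j := by
      rw [hC]
      simp only [Matrix.mulVec, dotProduct, Finset.mul_sum, Finset.sum_mul]
      rw [Finset.sum_comm]
      apply Finset.sum_congr rfl; intro j _
      apply Finset.sum_congr rfl; intro i _; ring
    rw [← hC, swap]
    unfold l1
    rw [Finset.mul_sum]
    apply Finset.sum_le_sum; intro j _
    have hj := hnoise j
    have hTb : |∑ i, X i j * ε i| ≤ (n:ℝ) * (lam/2) := by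
      rw [abs_div, abs_of_pos hN, div_le_iff₀ hN] at hj
      linarith [hj]
    calc (∑ i, X i j * ε i) * υ j ≤ |(∑ i, X i j * ε i) * υ j| := le_abs_self _
      _ = |∑ i, X i j * ε i| * |υ j| := abs_mul _ _
      _ ≤ ((n:ℝ) * (lam/2)) * |υ j| :=
          mul_le_mul_of_nonneg_right hTb (abs_nonneg _)
  -- clear denominators in key
  have hc : (0:ℝ) < 1 / (2 * n) := by positivity
  have h4 : (1/(2*(n:ℝ))) * (W - 2*C) ≤ lam * (a - b) := by
    have := h2
    nlinarith [key]
  have h5 : W - 2*C ≤ 2*(n:ℝ)*(lam*(a-b)) := by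
    have h2N : (0:ℝ) < 2*(n:ℝ) := by linarith
    have := mul_le_mul_of_nonneg_left h4 (le_of_lt h2N)
    have heq : 2*(n:ℝ) * ((1/(2*(n:ℝ))) * (W - 2*C)) = W - 2*C := by
      field_simp
    linarith [heq ▸ this]
  have h6 : W ≤ (n:ℝ)*lam*(3*a - b) := by nlinarith [h3, h5]
  nlinarith [mul_pos hN hlam, hWnn, h6]
end

section
/- Suppose the n×p matrix X satisfies RE(s,3,X) with constant K = K(s,3,X) > 0, Y = Xβ + ε with |supp(β)| = |S| ≤ s, ‖X_j‖₂ ≤ (1+θ)√n, and β̂ is a Lasso solution with penalty λ_n where ‖X^Tε/n‖_∞ ≤ λ_n/2. Then υ = β̂ − β satisfies: ‖υ_S‖₂ ≤ 4K²λ_n√s, ‖υ‖₁ ≤ 4K²λ_n s, and ‖υ‖₂ ≤ 8K²λ_n√s. -/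
open Finset

lemma l1_nonneg {p : ℕ} (v : Fin p → ℝ) : 0 ≤ l1 v :=
  Finset.sum_nonneg fun _ _ => abs_nonneg _
lemma l2_nonneg {p : ℕ} (v : Fin p → ℝ) : 0 ≤ l2 v := Real.sqrt_nonneg _
lemma l2_sq {p : ℕ} (v : Fin p → ℝ) : (l2 v) ^ 2 = ∑ i, (v i) ^ 2 :=
  Real.sq_sqrt (Finset.sum_nonneg fun _ _ => sq_nonneg _)
lemma l1_restr {p : ℕ} (T : Finset (Fin p)) (v : Fin p → ℝ) :
    l1 (restr T v) = ∑ j ∈ T, |v j| := by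
  simp [l1, restr, apply_ite abs, Finset.sum_ite_mem]
lemma l2_restr_sq {p : ℕ} (T : Finset (Fin p)) (v : Fin p → ℝ) :
    (l2 (restr T v)) ^ 2 = ∑ j ∈ T, (v j) ^ 2 := by
  rw [l2_sq]
  simp [restr, apply_ite (· ^ 2), Finset.sum_ite_mem]
lemma l1_split {p : ℕ} (T : Finset (Fin p)) (v : Fin p → ℝ) :
    l1 v = l1 (restr T v) + l1 (restr Tᶜ v) := by
  rw [l1_restr, l1_restr, Finset.sum_add_sum_compl]
  rfl
lemma l2_sq_split {p : ℕ} (T : Finset (Fin p)) (v : Fin p → ℝ) :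
    (l2 v) ^ 2 = (l2 (restr T v)) ^ 2 + (l2 (restr Tᶜ v)) ^ 2 := by
  rw [l2_sq, l2_restr_sq, l2_restr_sq, Finset.sum_add_sum_compl]
lemma l2_le_of_sq_le {p : ℕ} {v : Fin p → ℝ} {a : ℝ} (ha : 0 ≤ a)
    (h : (l2 v) ^ 2 ≤ a ^ 2) : l2 v ≤ a :=
  (pow_le_pow_iff_left₀ (l2_nonneg v) ha (by norm_num)).mp h
lemma cauchy_l1_l2 {p : ℕ} (T : Finset (Fin p)) (v : Fin p → ℝ) :
    l1 (restr T v) ≤ Real.sqrt T.card * l2 (restr T v) := by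
  have h := Finset.sum_mul_sq_le_sq_mul_sq T (fun _ => (1 : ℝ)) (fun j => |v j|)
  simp only [one_mul, one_pow, Finset.sum_const, nsmul_eq_mul, mul_one, sq_abs] at h
  have h2 : (l1 (restr T v)) ^ 2 ≤ (Real.sqrt T.card * l2 (restr T v)) ^ 2 := by
    rw [l1_restr, mul_pow, Real.sq_sqrt (by positivity), l2_restr_sq]
    exact h
  exact (pow_le_pow_iff_left₀ (by rw [l1_restr]; exact Finset.sum_nonneg fun _ _ => abs_nonneg _) (mul_nonneg (Real.sqrt_nonneg _) (l2_nonneg _)) (by norm_num)).mp h2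

set_option maxHeartbeats 1000000 in
/-- ℓ₂ and ℓ₁ bounds for the Lasso under RE(s,3,X):
‖υ_S‖₂ ≤ 4K²λ√s, ‖υ‖₁ ≤ 4K²λs, ‖υ‖₂ ≤ 8K²λ√s. -/
theorem stmt16 (n p s : ℕ) (hn : 1 ≤ n) (hs : 1 ≤ s) (hsp : 2 * s ≤ p)
    (X : Matrix (Fin n) (Fin p) ℝ) (β βhat : Fin p → ℝ) (ε : Fin n → ℝ)
    (Y : Fin n → ℝ) (lam θ K : ℝ) (hlam : 0 < lam) (hθ0 : 0 < θ) (hθ1 : θ < 1)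
    (hK : 0 < K)
    (hY : Y = X.mulVec β + ε)
    (S : Finset (Fin p)) (hS : S = Finset.univ.filter fun j => β j ≠ 0)
    (hScard : S.card ≤ s)
    -- RE(s,3,X) with constant K = K(s,3,X)
    (hRE : ∀ J0 : Finset (Fin p), J0.card ≤ s → ∀ v : Fin p → ℝ, v ≠ 0 →
      l1 (restr J0ᶜ v) ≤ 3 * l1 (restr J0 v) →
      Real.sqrt n * l2 (restr J0 v) ≤ K * l2 (X.mulVec v))
    -- column normalization
    (hcol : ∀ j, l2 (fun i => X i j) ≤ (1 + θ) * Real.sqrt n)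
    -- β̂ minimizes the Lasso objective
    (hopt : ∀ b : Fin p → ℝ,
      (1 / (2 * n)) * (l2 (Y - X.mulVec βhat)) ^ 2 + lam * l1 βhat ≤
        (1 / (2 * n)) * (l2 (Y - X.mulVec b)) ^ 2 + lam * l1 b)
    -- ‖X^T ε / n‖_∞ ≤ λ/2
    (hnoise : ∀ j, |(∑ i, X i j * ε i) / n| ≤ lam / 2) :
    l2 (restr S (βhat - β)) ≤ 4 * K ^ 2 * lam * Real.sqrt s ∧
      l1 (βhat - β) ≤ 4 * K ^ 2 * lam * s ∧
      l2 (βhat - β) ≤ 8 * K ^ 2 * lam * Real.sqrt s := by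
  have hn' : (0:ℝ) < n := by exact_mod_cast Nat.lt_of_lt_of_le Nat.zero_lt_one hn
  have hs' : (0:ℝ) < s := by exact_mod_cast Nat.lt_of_lt_of_le Nat.zero_lt_one hs
  set υ : Fin p → ℝ := βhat - β with hυdef
  by_cases h0 : υ = 0
  · rw [h0]
    have hz1 : l1 (0 : Fin p → ℝ) = 0 := by simp [l1]
    have hz2 : l2 (0 : Fin p → ℝ) = 0 := by simp [l2]
    have hz3 : restr S (0 : Fin p → ℝ) = 0 := by funext i; simp [restr]
    rw [hz1, hz3, hz2]
    refine ⟨by positivity, by positivity, by positivity⟩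
  -- main case
  set w : Fin n → ℝ := X.mulVec υ with hwdef
  set E : ℝ := ∑ i, ε i ^ 2 with hE
  set D : ℝ := ∑ i, ε i * w i with hD
  set W : ℝ := ∑ i, w i ^ 2 with hW
  have hWnn : 0 ≤ W := Finset.sum_nonneg fun _ _ => sq_nonneg _
  have hl2w : l2 w = Real.sqrt W := rfl
  have hl2wsq : l2 w ^ 2 = W := l2_sq w
  have hYβ : Y - X.mulVec β = ε := by rw [hY]; abel
  have hYβhat : Y - X.mulVec βhat = ε - w := by
    rw [hY, hwdef, hυdef, Matrix.mulVec_sub]; abel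
  have hexp : l2 (ε - w) ^ 2 = E - 2 * D + W := by
    rw [l2_sq]
    simp only [Pi.sub_apply]
    rw [hE, hD, hW, Finset.mul_sum, ← Finset.sum_sub_distrib, ← Finset.sum_add_distrib]
    exact Finset.sum_congr rfl fun i _ => by ring
  have hl2ε : l2 ε ^ 2 = E := l2_sq ε
  have hbasic : (1 / (2 * (n:ℝ))) * W ≤ (1 / (2 * (n:ℝ))) * (2 * D) + lam * (l1 β - l1 βhat) := by
    have h := hopt β
    rw [hYβ, hYβhat, hexp, hl2ε] at h
    linarith only [h]
  -- noise bound
  have hDn : D / n ≤ (lam / 2) * l1 υ := by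
    have hswap : D = ∑ j, υ j * (∑ i, X i j * ε i) := by
      rw [hD, hwdef]
      simp only [Matrix.mulVec, dotProduct, Finset.mul_sum]
      rw [Finset.sum_comm]
      exact Finset.sum_congr rfl fun j _ => Finset.sum_congr rfl fun i _ => by ring
    have : D / n = ∑ j, υ j * ((∑ i, X i j * ε i) / n) := by
      rw [hswap, Finset.sum_div]
      exact Finset.sum_congr rfl fun j _ => by ring
    rw [this, l1, Finset.mul_sum]
    refine Finset.sum_le_sum fun j _ => ?_
    calc υ j * ((∑ i, X i j * ε i) / n) ≤ |υ j * ((∑ i, X i j * ε i) / n)| := le_abs_self _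
      _ = |υ j| * |(∑ i, X i j * ε i) / n| := abs_mul _ _
      _ ≤ |υ j| * (lam / 2) := by
          exact mul_le_mul_of_nonneg_left (hnoise j) (abs_nonneg _)
      _ = lam / 2 * |υ j| := by ring
  -- decomposition of the penalty difference
  have hβ0 : ∀ j, j ∉ S → β j = 0 := by
    intro j hj
    rw [hS] at hj
    simpa using hj
  set a : ℝ := l1 (restr S υ) with ha
  set b : ℝ := l1 (restr Sᶜ υ) with hb
  have hann : 0 ≤ a := l1_nonneg _
  have hbnn : 0 ≤ b := l1_nonneg _
  have hl1split : l1 υ = a + b := l1_split S υ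
  have hpen : l1 β - l1 βhat ≤ a - b := by
    have h1 : l1 β = ∑ j ∈ S, |β j| := by
      rw [l1, ← Finset.sum_add_sum_compl S]
      have : ∑ j ∈ Sᶜ, |β j| = 0 := Finset.sum_eq_zero fun j hj => by
        rw [hβ0 j (Finset.mem_compl.mp hj), abs_zero]
      rw [this, add_zero]
    have h2 : l1 βhat = ∑ j ∈ S, |βhat j| + ∑ j ∈ Sᶜ, |υ j| := by
      rw [l1, ← Finset.sum_add_sum_compl S]
      congr 1
      refine Finset.sum_congr rfl fun j hj => ?_
      rw [hυdef]
      simp [hβ0 j (Finset.mem_compl.mp hj)]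
    rw [h1, h2, ha, hb, l1_restr, l1_restr]
    have h3 : ∑ j ∈ S, |β j| - ∑ j ∈ S, |βhat j| ≤ ∑ j ∈ S, |υ j| := by
      rw [← Finset.sum_sub_distrib]
      refine Finset.sum_le_sum fun j _ => ?_
      have := abs_sub_abs_le_abs_sub (β j) (βhat j)
      have h4 : |β j - βhat j| = |υ j| := by rw [hυdef]; simp [abs_sub_comm]
      linarith [h4 ▸ this]
    linarith
  -- combine
  have h2n : (0:ℝ) < 2 * n := by positivity
  have hb2 : W ≤ 2 * D + 2 * n * (lam * (l1 β - l1 βhat)) := by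
    have h := mul_le_mul_of_nonneg_left hbasic (le_of_lt h2n)
    have e1 : 2 * (n:ℝ) * (1 / (2 * n) * W) = W := by field_simp
    have e2 : 2 * (n:ℝ) * (1 / (2 * n) * (2 * D) + lam * (l1 β - l1 βhat))
        = 2 * D + 2 * n * (lam * (l1 β - l1 βhat)) := by field_simp
    rw [e1, e2] at h
    exact h
  have hDle : D ≤ lam / 2 * (a + b) * n := by
    rw [← hl1split]
    exact (div_le_iff₀ hn').mp hDn
  have hWle : W ≤ n * (3 * lam * a - lam * b) := by
    have hp := mul_le_mul_of_nonneg_left hpen (by positivity : (0:ℝ) ≤ 2 * n * lam)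
    linarith only [hb2, hDle, hp]
  have hWn : W / n ≤ 3 * lam * a - lam * b :=
    (div_le_iff₀ hn').mpr (by linarith only [hWle])
  have hcone : b ≤ 3 * a := by
    have h := div_nonneg hWnn (le_of_lt hn')
    have h4 : lam * b ≤ lam * (3 * a) := by linarith only [h, hWn]
    exact le_of_mul_le_mul_left h4 hlam
  -- Cauchy–Schwarz step
  set r : ℝ := l2 (restr S υ) with hr
  have hrnn : 0 ≤ r := l2_nonneg _
  have hcau : a ≤ Real.sqrt s * r := by
    calc a ≤ Real.sqrt S.card * r := cauchy_l1_l2 S υ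
      _ ≤ Real.sqrt s * r := by
        apply mul_le_mul_of_nonneg_right _ hrnn
        exact Real.sqrt_le_sqrt (by exact_mod_cast hScard)
  have hkey : W / n + lam * (a + b) ≤ 4 * lam * (Real.sqrt s * r) := by
    have h4a := mul_le_mul_of_nonneg_left hcau (by positivity : (0:ℝ) ≤ 4 * lam)
    linarith only [hWn, h4a]
  -- RE at S
  have hREs : Real.sqrt n * r ≤ K * l2 w := by
    rw [hr]
    exact hRE S hScard υ h0 (by rw [← ha, ← hb]; exact hcone)
  set t : ℝ := Real.sqrt (W / n) with htdef
  have htnn : 0 ≤ t := Real.sqrt_nonneg _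
  have ht2 : t ^ 2 = W / n := Real.sq_sqrt (div_nonneg hWnn (le_of_lt hn'))
  have hsqrtn : (0:ℝ) < Real.sqrt n := Real.sqrt_pos.mpr hn'
  have hlwt : l2 w = Real.sqrt n * t := by
    rw [hl2w, htdef, ← Real.sqrt_mul (le_of_lt hn')]
    congr 1
    field_simp
  have hrKt : r ≤ K * t := by
    rw [hlwt] at hREs
    have h : Real.sqrt n * r ≤ Real.sqrt n * (K * t) := by linarith only [hREs]
    exact le_of_mul_le_mul_left h hsqrtn
  have hss : Real.sqrt s * Real.sqrt s = (s:ℝ) := Real.mul_self_sqrt (le_of_lt hs')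
  have hWn4 : W / n ≤ 4 * lam * (Real.sqrt s * r) := by
    have h20 := mul_nonneg (le_of_lt hlam) (add_nonneg hann hbnn)
    linarith only [hkey, h20]
  -- Goal 1
  have hg1 : r ≤ 4 * K ^ 2 * lam * Real.sqrt s := by
    have hr2 : r ^ 2 ≤ K ^ 2 * (W / n) := by
      have h := pow_le_pow_left₀ hrnn hrKt 2
      rw [mul_pow, ht2] at h
      exact h
    have h6 := mul_le_mul_of_nonneg_left hWn4 (sq_nonneg K)
    have h5 : r ^ 2 ≤ 4 * K ^ 2 * lam * Real.sqrt s * r := by linarith only [hr2, h6]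
    rcases eq_or_lt_of_le hrnn with he | hpos
    · rw [← he]; positivity
    · exact le_of_mul_le_mul_right (by linarith only [h5] : r * r ≤ (4 * K ^ 2 * lam * Real.sqrt s) * r) hpos
  -- Goal 2
  have hg2 : l1 υ ≤ 4 * K ^ 2 * lam * s := by
    have h8 := mul_le_mul_of_nonneg_left hrKt (by positivity : (0:ℝ) ≤ 4 * lam * Real.sqrt s)
    have h7 : lam * l1 υ ≤ 4 * lam * Real.sqrt s * (K * t) - t ^ 2 := by
      rw [hl1split]
      linarith only [hkey, h8, ht2]
    have h9 : 4 * lam * Real.sqrt s * (K * t) - t ^ 2 ≤ 4 * K ^ 2 * lam ^ 2 * s := by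
      have hc2 : (2 * lam * Real.sqrt s * K) ^ 2 = 4 * lam ^ 2 * (s:ℝ) * K ^ 2 := by
        rw [show (2 * lam * Real.sqrt s * K) ^ 2
            = 4 * lam ^ 2 * (Real.sqrt s ^ 2) * K ^ 2 from by ring,
          Real.sq_sqrt (le_of_lt hs')]
      linarith only [sq_nonneg (t - 2 * lam * Real.sqrt s * K), hc2]
    have h10 : lam * l1 υ ≤ lam * (4 * K ^ 2 * lam * s) := by linarith only [h7, h9]
    exact le_of_mul_le_mul_left h10 hlam
  -- bound on t
  have htle : t ≤ 4 * K * lam * Real.sqrt s := by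
    have h12 := mul_le_mul_of_nonneg_left hg1 (by positivity : (0:ℝ) ≤ 4 * lam * Real.sqrt s)
    have h11 : t ^ 2 ≤ (4 * K * lam * Real.sqrt s) ^ 2 := by
      rw [ht2]
      linarith only [hWn4, h12]
    exact (pow_le_pow_iff_left₀ htnn (by positivity) (by norm_num)).mp h11
  -- T₀ : the s largest coordinates
  have hsp' : s ≤ p := by omega
  have hpownon : ((Finset.univ : Finset (Fin p)).powersetCard s).Nonempty := by
    apply Finset.powersetCard_nonempty.mpr
    simpa using hsp'
  obtain ⟨T₀, hT₀mem, hT₀max⟩ :=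
    Finset.exists_max_image _ (fun T => ∑ j ∈ T, |υ j|) hpownon
  have hT₀card : T₀.card = s := (Finset.mem_powersetCard.mp hT₀mem).2
  obtain ⟨S', hSS', hS'univ, hS'card⟩ :=
    Finset.exists_subsuperset_card_eq (Finset.subset_univ S) hScard (by simpa using hsp')
  have hT₀S : ∑ j ∈ S, |υ j| ≤ ∑ j ∈ T₀, |υ j| := by
    calc ∑ j ∈ S, |υ j| ≤ ∑ j ∈ S', |υ j| :=
          Finset.sum_le_sum_of_subset_of_nonneg hSS' fun _ _ _ => abs_nonneg _
      _ ≤ ∑ j ∈ T₀, |υ j| :=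
          hT₀max S' (Finset.mem_powersetCard.mpr ⟨Finset.subset_univ _, hS'card⟩)
  -- cone condition at T₀
  have haSval : a = ∑ j ∈ S, |υ j| := by rw [ha, l1_restr]
  have haTval : l1 (restr T₀ υ) = ∑ j ∈ T₀, |υ j| := l1_restr T₀ υ
  have hconeT : l1 (restr T₀ᶜ υ) ≤ 3 * l1 (restr T₀ υ) := by
    have h13 : l1 υ = l1 (restr T₀ υ) + l1 (restr T₀ᶜ υ) := l1_split T₀ υ
    have h15 : a ≤ l1 (restr T₀ υ) := by rw [haSval, haTval]; exact hT₀S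
    linarith [hl1split, hcone]
  have hRET := hRE T₀ (le_of_eq hT₀card) υ h0 hconeT
  have haTKt : l2 (restr T₀ υ) ≤ K * t := by
    rw [hlwt] at hRET
    have h : Real.sqrt n * l2 (restr T₀ υ) ≤ Real.sqrt n * (K * t) := by linarith only [hRET]
    exact le_of_mul_le_mul_left h hsqrtn
  have hl2T₀ : l2 (restr T₀ υ) ≤ 4 * K ^ 2 * lam * Real.sqrt s := by
    calc l2 (restr T₀ υ) ≤ K * t := haTKt
      _ ≤ K * (4 * K * lam * Real.sqrt s) :=
          mul_le_mul_of_nonneg_left htle (le_of_lt hK)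
      _ = 4 * K ^ 2 * lam * Real.sqrt s := by ring
  -- tail bound
  set A : ℝ := ∑ i ∈ T₀, |υ i| with hA
  have htail : ∀ j ∈ T₀ᶜ, (s:ℝ) * |υ j| ≤ A := by
    intro j hj
    have hjT : j ∉ T₀ := Finset.mem_compl.mp hj
    have hle : ∀ i ∈ T₀, |υ j| ≤ |υ i| := by
      intro i hi
      have hjE : j ∉ T₀.erase i := fun hmem => hjT (Finset.mem_of_mem_erase hmem)
      have hT' : insert j (T₀.erase i) ∈ (Finset.univ : Finset (Fin p)).powersetCard s := by
        refine Finset.mem_powersetCard.mpr ⟨Finset.subset_univ _, ?_⟩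
        rw [Finset.card_insert_of_notMem hjE, Finset.card_erase_of_mem hi, hT₀card]
        omega
      have hmax := hT₀max _ hT'
      rw [Finset.sum_insert hjE] at hmax
      have herase : |υ i| + ∑ x ∈ T₀.erase i, |υ x| = ∑ x ∈ T₀, |υ x| :=
        Finset.add_sum_erase T₀ (fun x => |υ x|) hi
      linarith only [hmax, herase]
    calc (s:ℝ) * |υ j| = ∑ _i ∈ T₀, |υ j| := by
          rw [Finset.sum_const, hT₀card, nsmul_eq_mul]
      _ ≤ A := Finset.sum_le_sum hle
  have hAl1 : A ≤ l1 υ := by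
    rw [hA, l1]
    exact Finset.sum_le_sum_of_subset_of_nonneg (Finset.subset_univ _) fun _ _ _ => abs_nonneg _
  have hTcl1 : ∑ j ∈ T₀ᶜ, |υ j| ≤ l1 υ := by
    rw [l1]
    exact Finset.sum_le_sum_of_subset_of_nonneg (Finset.subset_univ _) fun _ _ _ => abs_nonneg _
  have htailsum : (l2 (restr T₀ᶜ υ)) ^ 2 ≤ l1 υ * l1 υ / s := by
    rw [l2_restr_sq]
    have h16 : ∀ j ∈ T₀ᶜ, (υ j) ^ 2 ≤ |υ j| * (A / s) := by
      intro j hj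
      have h17 := htail j hj
      have h18 : |υ j| ≤ A / s := (le_div_iff₀ hs').mpr (by linarith only [h17])
      calc (υ j) ^ 2 = |υ j| * |υ j| := by rw [← sq_abs]; ring
        _ ≤ |υ j| * (A / s) := mul_le_mul_of_nonneg_left h18 (abs_nonneg _)
    have hAs : 0 ≤ A / s := by
      have : (0:ℝ) ≤ A := Finset.sum_nonneg fun _ _ => abs_nonneg _
      positivity
    calc ∑ j ∈ T₀ᶜ, (υ j) ^ 2 ≤ ∑ j ∈ T₀ᶜ, |υ j| * (A / s) := Finset.sum_le_sum h16
      _ = (∑ j ∈ T₀ᶜ, |υ j|) * (A / s) := by rw [Finset.sum_mul]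
      _ ≤ l1 υ * (l1 υ / s) := by
          have h19 : A / s ≤ l1 υ / s := by gcongr
          exact mul_le_mul hTcl1 h19 hAs (l1_nonneg υ)
      _ = l1 υ * l1 υ / s := by ring
  have hl2Tc : l2 (restr T₀ᶜ υ) ≤ 4 * K ^ 2 * lam * Real.sqrt s := by
    apply l2_le_of_sq_le (by positivity)
    calc (l2 (restr T₀ᶜ υ)) ^ 2 ≤ l1 υ * l1 υ / s := htailsum
      _ ≤ (4 * K ^ 2 * lam * s) * (4 * K ^ 2 * lam * s) / s := by
          have h21 := l1_nonneg υ
          gcongr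
      _ = (4 * K ^ 2 * lam * Real.sqrt s) ^ 2 := by
          rw [mul_pow, Real.sq_sqrt (le_of_lt (by exact_mod_cast hs' : (0:ℝ) < (s:ℝ)))]
          field_simp
  have hfinal : l2 υ ≤ 8 * K ^ 2 * lam * Real.sqrt s := by
    apply l2_le_of_sq_le (by positivity)
    rw [l2_sq_split T₀ υ]
    have hx := pow_le_pow_left₀ (l2_nonneg (restr T₀ υ)) hl2T₀ 2
    have hy := pow_le_pow_left₀ (l2_nonneg (restr T₀ᶜ υ)) hl2Tc 2
    linarith only [hx, hy, sq_nonneg (4 * K ^ 2 * lam * Real.sqrt s)]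
  exact ⟨hg1, hg2, hfinal⟩
end
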